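/- Let ω < 0, 0 < α ≤ 1 and 0 < αγ ≤ β ≤ 1, and let λ ∈ ℂ. The equation F(s) = λ has a nonzero purely imaginary root s (i.e., Re(s) = 0, s ≠ 0) if and only if λ ∈ Ψ ∪ Ψ̄, where Ψ = {Λ(θ) : θ ∈ (0, απ/2)} and Ψ̄ = {z ∈ ℂ : conj(z) ∈ Ψ}. More precisely, F(iμ) = λ for some μ > 0 iff λ ∈ Ψ, and F(−iμ) = λ for some μ > 0 iff λ ∈ Ψ̄. -/

import Mathlib

open Real Complex Filter Set Topology

/-- The curve parametrization Λ(θ) bounding the stability region. -/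
noncomputable def Lam (α β γ ω : ℝ) (θ : ℝ) : ℂ :=
  ((|ω| ^ (β / α) * Real.sin θ ^ (β / α - γ) * Real.sin (α * π / 2) ^ γ *
      Real.sin (α * π / 2 - θ) ^ (-(β / α)) : ℝ) : ℂ) *
    Complex.exp (Complex.I * ((γ * θ + (β - α * γ) * π / 2 : ℝ) : ℂ))

/-- The characteristic function F(s) = s^(β-αγ) (s^α - ω)^γ (principal branches). -/
noncomputable def Fc (α β γ ω : ℝ) (s : ℂ) : ℂ :=
  s ^ ((β - α * γ : ℝ) : ℂ) * (s ^ ((α : ℝ) : ℂ) - (ω : ℂ)) ^ ((γ : ℝ) : ℂ)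

/-- μ(θ) = (|ω| sin θ / sin(απ/2 - θ))^(1/α). -/
noncomputable def muP (α ω : ℝ) (θ : ℝ) : ℝ :=
  (|ω| * Real.sin θ / Real.sin (α * π / 2 - θ)) ^ (1 / α)

/-- ρ(θ) = |ω| sin(απ/2) / sin(απ/2 - θ). -/
noncomputable def rhoP (α ω : ℝ) (θ : ℝ) : ℝ :=
  |ω| * Real.sin (α * π / 2) / Real.sin (α * π / 2 - θ)

/-- The curve Ψ = Λ((0, απ/2)). -/
noncomputable def PsiSet (α β γ ω : ℝ) : Set ℂ :=
  Lam α β γ ω '' Set.Ioo 0 (α * π / 2)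

/-- The complex conjugate curve Ψ̄. -/
noncomputable def PsiBar (α β γ ω : ℝ) : Set ℂ :=
  {z : ℂ | (starRingEnd ℂ) z ∈ PsiSet α β γ ω}

lemma cpow_polar (r θ c : ℝ) (hr : 0 < r) (hθ : θ ∈ Set.Ioc (-π) π) :
    ((r : ℂ) * Complex.exp ((θ : ℂ) * Complex.I)) ^ (c : ℂ) =
      ((r ^ c : ℝ) : ℂ) * Complex.exp (((c * θ : ℝ) : ℂ) * Complex.I) := by
  have hz : (r : ℂ) * Complex.exp ((θ : ℂ) * Complex.I) ≠ 0 := by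
    apply mul_ne_zero
    · exact_mod_cast hr.ne'
    · exact Complex.exp_ne_zero _
  have habs : ‖(r : ℂ) * Complex.exp ((θ : ℂ) * Complex.I)‖ = r := by
    rw [norm_mul, Complex.norm_exp_ofReal_mul_I, Complex.norm_real, Real.norm_eq_abs, abs_of_pos hr,
      mul_one]
  have harg : Complex.arg ((r : ℂ) * Complex.exp ((θ : ℂ) * Complex.I)) = θ := by
    rw [Complex.exp_mul_I]
    exact Complex.arg_mul_cos_add_sin_mul_I hr hθ
  have hlog : Complex.log ((r : ℂ) * Complex.exp ((θ : ℂ) * Complex.I))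
      = (Real.log r : ℂ) + (θ : ℂ) * Complex.I := by
    rw [Complex.log, habs, harg]
  rw [Complex.cpow_def_of_ne_zero hz, hlog]
  rw [add_mul, Complex.exp_add, Real.rpow_def_of_pos hr]
  push_cast
  ring_nf

lemma I_mul_eq_polar (μ : ℝ) :
    Complex.I * (μ : ℂ) = (μ : ℂ) * Complex.exp (((π/2 : ℝ) : ℂ) * Complex.I) := by
  rw [Complex.exp_mul_I, ← Complex.ofReal_cos, ← Complex.ofReal_sin]
  simp [mul_comm]

lemma key (α β γ ω : ℝ) (hω : ω < 0) (hα0 : 0 < α) (hα1 : α ≤ 1)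
    (μ θ : ℝ) (hμ : 0 < μ) (hθ : θ ∈ Set.Ioo 0 (α * π / 2))
    (hrel : μ ^ α * Real.sin (α * π / 2 - θ) = |ω| * Real.sin θ) :
    Fc α β γ ω (Complex.I * (μ : ℂ)) = Lam α β γ ω θ := by
  set Φ := α * π / 2 with hΦdef
  have hπ := Real.pi_pos
  have hΦ0 : 0 < Φ := by positivity
  have hΦle : Φ ≤ π / 2 := by
    rw [hΦdef]; nlinarith
  have hθ0 : 0 < θ := hθ.1
  have hθΦ : θ < Φ := hθ.2
  have hsΦ : 0 < Real.sin Φ := Real.sin_pos_of_pos_of_lt_pi hΦ0 (by linarith)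
  have hsθ : 0 < Real.sin θ := Real.sin_pos_of_pos_of_lt_pi hθ0 (by linarith)
  have hsΔ : 0 < Real.sin (Φ - θ) := Real.sin_pos_of_pos_of_lt_pi (by linarith) (by linarith)
  have hωa : 0 < |ω| := abs_pos.mpr hω.ne
  set r : ℝ := |ω| * Real.sin Φ / Real.sin (Φ - θ) with hrdef
  have hr : 0 < r := by positivity
  have hΔ : Real.sin (Φ - θ) = Real.sin Φ * Real.cos θ - Real.cos Φ * Real.sin θ :=
    Real.sin_sub Φ θ
  have e1 : r * Real.cos θ = μ ^ α * Real.cos Φ + |ω| := by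
    rw [hrdef]
    field_simp
    linear_combination (-Real.cos Φ) * hrel - |ω| * hΔ
  have e2 : r * Real.sin θ = μ ^ α * Real.sin Φ := by
    rw [hrdef]
    field_simp
    linear_combination (-1 : ℝ) * hrel
  -- polar form of i μ powers
  have hIμ := I_mul_eq_polar μ
  have hIoc1 : (π/2 : ℝ) ∈ Set.Ioc (-π) π := ⟨by linarith, by linarith⟩
  have hIoc2 : θ ∈ Set.Ioc (-π) π := ⟨by linarith, by linarith⟩
  have hpow : ∀ c : ℝ, (Complex.I * (μ : ℂ)) ^ (c : ℂ)
      = ((μ ^ c : ℝ) : ℂ) * Complex.exp (((c * (π/2) : ℝ) : ℂ) * Complex.I) := by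
    intro c
    rw [hIμ, cpow_polar μ (π/2) c hμ hIoc1]
  have hz : (Complex.I * (μ : ℂ)) ^ ((α : ℝ) : ℂ) - (ω : ℂ)
      = (r : ℂ) * Complex.exp ((θ : ℂ) * Complex.I) := by
    rw [hpow α]
    have hc : α * (π/2) = Φ := by rw [hΦdef]; ring
    rw [hc, Complex.exp_mul_I, Complex.exp_mul_I]
    have habs : (|ω| : ℝ) = -ω := abs_of_neg hω
    have E1 : (r : ℂ) * Complex.cos (θ : ℂ) = ((μ ^ α : ℝ) : ℂ) * Complex.cos (Φ : ℂ) - (ω : ℂ) := by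
      rw [← Complex.ofReal_cos, ← Complex.ofReal_cos]
      exact_mod_cast (by rw [habs] at e1; linarith [e1] :
        r * Real.cos θ = μ ^ α * Real.cos Φ - ω)
    have E2 : (r : ℂ) * Complex.sin (θ : ℂ) = ((μ ^ α : ℝ) : ℂ) * Complex.sin (Φ : ℂ) := by
      rw [← Complex.ofReal_sin, ← Complex.ofReal_sin]
      exact_mod_cast e2
    linear_combination -E1 - Complex.I * E2
  rw [Fc, hz, hpow (β - α * γ), cpow_polar r θ γ hr hIoc2]
  -- combine
  rw [Lam]
  have hμα : μ ^ α = |ω| * Real.sin θ / Real.sin (Φ - θ) := by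
    field_simp
    linarith [hrel]
  set c : ℝ := β / α - γ with hcdef
  have hmod : μ ^ (β - α * γ) * r ^ γ =
      |ω| ^ (β / α) * Real.sin θ ^ (β / α - γ) * Real.sin Φ ^ γ *
        Real.sin (Φ - θ) ^ (-(β / α)) := by
    have h1 : μ ^ (β - α * γ) = (μ ^ α) ^ c := by
      rw [← Real.rpow_mul hμ.le]
      congr 1
      rw [hcdef]; field_simp
    have h2 : (μ ^ α) ^ c = |ω| ^ c * Real.sin θ ^ c * Real.sin (Φ - θ) ^ (-c) := by
      rw [hμα, Real.div_rpow (by positivity) hsΔ.le, Real.mul_rpow hωa.le hsθ.le,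
        Real.rpow_neg hsΔ.le, div_eq_mul_inv]
    have h3 : r ^ γ = |ω| ^ γ * Real.sin Φ ^ γ * Real.sin (Φ - θ) ^ (-γ) := by
      rw [hrdef, Real.div_rpow (by positivity) hsΔ.le, Real.mul_rpow hωa.le hsΦ.le,
        Real.rpow_neg hsΔ.le, div_eq_mul_inv]
    rw [h1, h2, h3]
    have hba : β / α = c + γ := by rw [hcdef]; ring
    rw [hba, show c + γ - γ = c by ring, Real.rpow_add hωa,
      show -(c + γ) = -c + -γ by ring, Real.rpow_add hsΔ]
    ring
  push_cast [← hmod]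
  rw [mul_mul_mul_comm, ← Complex.exp_add]
  congr 1
  · rw [← Complex.ofReal_mul, hmod, hΦdef, hcdef]
    push_cast
    ring_nf
  · congr 1
    ring

lemma exists_theta (α ω : ℝ) (hω : ω < 0) (hα0 : 0 < α) (hα1 : α ≤ 1)
    (μ : ℝ) (hμ : 0 < μ) :
    ∃ θ ∈ Set.Ioo 0 (α * π / 2),
      μ ^ α * Real.sin (α * π / 2 - θ) = |ω| * Real.sin θ := by
  set Φ := α * π / 2 with hΦdef
  have hπ := Real.pi_pos
  have hΦ0 : 0 < Φ := by positivity
  have hΦle : Φ ≤ π / 2 := by rw [hΦdef]; nlinarith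
  have hsΦ : 0 < Real.sin Φ := Real.sin_pos_of_pos_of_lt_pi hΦ0 (by linarith)
  have hωa : 0 < |ω| := abs_pos.mpr hω.ne
  have hμα : 0 < μ ^ α := Real.rpow_pos_of_pos hμ α
  set f : ℝ → ℝ := fun θ => μ ^ α * Real.sin (Φ - θ) - |ω| * Real.sin θ with hfdef
  have hcont : ContinuousOn f (Set.Icc 0 Φ) := by
    apply Continuous.continuousOn
    fun_prop
  have hf0 : f 0 = μ ^ α * Real.sin Φ := by simp [hfdef]
  have hfΦ : f Φ = -(|ω| * Real.sin Φ) := by simp [hfdef]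
  have h0 : (0 : ℝ) ∈ Set.Ioo (f Φ) (f 0) := by
    rw [hf0, hfΦ]
    constructor
    · simp only [neg_lt, neg_zero]; positivity
    · positivity
  obtain ⟨θ, hθ, hfθ⟩ := intermediate_value_Ioo' hΦ0.le hcont h0
  refine ⟨θ, hθ, ?_⟩
  have : μ ^ α * Real.sin (Φ - θ) - |ω| * Real.sin θ = 0 := hfθ
  linarith

lemma muP_pos_rel (α ω : ℝ) (hω : ω < 0) (hα0 : 0 < α) (hα1 : α ≤ 1)
    (θ : ℝ) (hθ : θ ∈ Set.Ioo 0 (α * π / 2)) :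
    0 < muP α ω θ ∧
      (muP α ω θ) ^ α * Real.sin (α * π / 2 - θ) = |ω| * Real.sin θ := by
  set Φ := α * π / 2 with hΦdef
  have hπ := Real.pi_pos
  have hΦ0 : 0 < Φ := by positivity
  have hΦle : Φ ≤ π / 2 := by rw [hΦdef]; nlinarith
  have hsθ : 0 < Real.sin θ := Real.sin_pos_of_pos_of_lt_pi hθ.1 (by nlinarith [hθ.2])
  have hsΔ : 0 < Real.sin (Φ - θ) :=
    Real.sin_pos_of_pos_of_lt_pi (by nlinarith [hθ.1, hθ.2]) (by nlinarith [hθ.1])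
  have hωa : 0 < |ω| := abs_pos.mpr hω.ne
  have hx : 0 < |ω| * Real.sin θ / Real.sin (Φ - θ) := by positivity
  have hpos : 0 < muP α ω θ := Real.rpow_pos_of_pos hx _
  refine ⟨hpos, ?_⟩
  have hμα : (muP α ω θ) ^ α = |ω| * Real.sin θ / Real.sin (Φ - θ) := by
    rw [muP, ← Real.rpow_mul hx.le, one_div, inv_mul_cancel₀ hα0.ne', Real.rpow_one]
  rw [hμα]
  field_simp

lemma Fc_neg_I (α β γ ω : ℝ) (hω : ω < 0) (hα0 : 0 < α) (hα1 : α ≤ 1)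
    (μ : ℝ) (hμ : 0 < μ) :
    Fc α β γ ω (-(Complex.I * (μ : ℂ))) =
      (starRingEnd ℂ) (Fc α β γ ω (Complex.I * (μ : ℂ))) := by
  have hπ := Real.pi_pos
  have h1 : -(Complex.I * (μ : ℂ)) = (starRingEnd ℂ) (Complex.I * (μ : ℂ)) := by
    rw [map_mul, Complex.conj_I, Complex.conj_ofReal]
    ring
  have harg1 : (Complex.I * (μ : ℂ)).arg ≠ π := by
    intro h
    rw [Complex.arg_eq_pi_iff] at h
    have him : (Complex.I * (μ : ℂ)).im = μ := by simp
    rw [him] at h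
    exact hμ.ne' h.2
  have hΦ0 : 0 < α * (π / 2) := by positivity
  have hΦle : α * (π / 2) ≤ π / 2 := by nlinarith
  have hsΦ : 0 < Real.sin (α * (π / 2)) :=
    Real.sin_pos_of_pos_of_lt_pi hΦ0 (by linarith)
  have harg2 : ((Complex.I * (μ : ℂ)) ^ ((α : ℝ) : ℂ) - (ω : ℂ)).arg ≠ π := by
    intro h
    rw [Complex.arg_eq_pi_iff] at h
    have him : ((Complex.I * (μ : ℂ)) ^ ((α : ℝ) : ℂ) - (ω : ℂ)).im
        = μ ^ α * Real.sin (α * (π / 2)) := by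
      rw [I_mul_eq_polar, cpow_polar μ (π/2) α hμ ⟨by linarith, by linarith⟩]
      simp only [Complex.sub_im, Complex.ofReal_im, Complex.im_ofReal_mul,
        Complex.exp_ofReal_mul_I_im, sub_zero]
    rw [him] at h
    have : 0 < μ ^ α * Real.sin (α * (π / 2)) := by
      have := Real.rpow_pos_of_pos hμ α
      positivity
    linarith [h.2]
  have hc1 : ((starRingEnd ℂ) (Complex.I * (μ : ℂ))) ^ ((β - α * γ : ℝ) : ℂ)
      = (starRingEnd ℂ) ((Complex.I * (μ : ℂ)) ^ ((β - α * γ : ℝ) : ℂ)) := by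
    rw [Complex.conj_cpow _ _ harg1, Complex.conj_ofReal]
  have hc2 : ((starRingEnd ℂ) (Complex.I * (μ : ℂ))) ^ ((α : ℝ) : ℂ)
      = (starRingEnd ℂ) ((Complex.I * (μ : ℂ)) ^ ((α : ℝ) : ℂ)) := by
    rw [Complex.conj_cpow _ _ harg1, Complex.conj_ofReal]
  have hc3 : (starRingEnd ℂ) ((Complex.I * (μ : ℂ)) ^ ((α : ℝ) : ℂ)) - (ω : ℂ)
      = (starRingEnd ℂ) ((Complex.I * (μ : ℂ)) ^ ((α : ℝ) : ℂ) - (ω : ℂ)) := by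
    rw [map_sub, Complex.conj_ofReal]
  rw [h1, Fc, Fc, hc1, hc2, hc3, Complex.conj_cpow _ _ harg2, Complex.conj_ofReal, map_mul]

theorem pure_imaginary_roots_iff (α β γ ω : ℝ) (hω : ω < 0) (hα0 : 0 < α) (hα1 : α ≤ 1)
    (hαγ : 0 < α * γ) (hβ0 : α * γ ≤ β) (hβ1 : β ≤ 1) (lam : ℂ) :
    ((∃ μ : ℝ, 0 < μ ∧ Fc α β γ ω (Complex.I * (μ : ℂ)) = lam) ↔ lam ∈ PsiSet α β γ ω) ∧
    ((∃ μ : ℝ, 0 < μ ∧ Fc α β γ ω (-(Complex.I * (μ : ℂ))) = lam) ↔ lam ∈ PsiBar α β γ ω) ∧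
    ((∃ s : ℂ, s.re = 0 ∧ s ≠ 0 ∧ Fc α β γ ω s = lam) ↔
      lam ∈ PsiSet α β γ ω ∪ PsiBar α β γ ω) := by
  have part1 : ∀ l : ℂ,
      (∃ μ : ℝ, 0 < μ ∧ Fc α β γ ω (Complex.I * (μ : ℂ)) = l) ↔ l ∈ PsiSet α β γ ω := by
    intro l
    constructor
    · rintro ⟨μ, hμ, hF⟩
      obtain ⟨θ, hθ, hrel⟩ := exists_theta α ω hω hα0 hα1 μ hμ
      exact ⟨θ, hθ, by rw [← key α β γ ω hω hα0 hα1 μ θ hμ hθ hrel, hF]⟩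
    · rintro ⟨θ, hθ, hL⟩
      obtain ⟨hpos, hrel⟩ := muP_pos_rel α ω hω hα0 hα1 θ hθ
      exact ⟨muP α ω θ, hpos,
        by rw [key α β γ ω hω hα0 hα1 (muP α ω θ) θ hpos hθ hrel, hL]⟩
  have part2 : (∃ μ : ℝ, 0 < μ ∧ Fc α β γ ω (-(Complex.I * (μ : ℂ))) = lam) ↔
      lam ∈ PsiBar α β γ ω := by
    have hswap : (∃ μ : ℝ, 0 < μ ∧ Fc α β γ ω (-(Complex.I * (μ : ℂ))) = lam) ↔
        (∃ μ : ℝ, 0 < μ ∧ Fc α β γ ω (Complex.I * (μ : ℂ)) = (starRingEnd ℂ) lam) := by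
      constructor
      · rintro ⟨μ, hμ, hF⟩
        refine ⟨μ, hμ, ?_⟩
        rw [Fc_neg_I α β γ ω hω hα0 hα1 μ hμ] at hF
        rw [← hF, Complex.conj_conj]
      · rintro ⟨μ, hμ, hF⟩
        refine ⟨μ, hμ, ?_⟩
        rw [Fc_neg_I α β γ ω hω hα0 hα1 μ hμ, hF, Complex.conj_conj]
    rw [hswap]
    exact part1 ((starRingEnd ℂ) lam)
  refine ⟨part1 lam, part2, ?_⟩
  constructor
  · rintro ⟨s, hre, hs0, hF⟩
    have him : s.im ≠ 0 := by
      intro h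
      exact hs0 (Complex.ext hre (by simpa using h))
    rcases him.lt_or_gt with h | h
    · right
      apply part2.mp
      refine ⟨-s.im, by linarith, ?_⟩
      have hseq : s = -(Complex.I * ((-s.im : ℝ) : ℂ)) := by
        apply Complex.ext <;> simp [hre]
      rw [← hseq]
      exact hF
    · left
      apply (part1 lam).mp
      refine ⟨s.im, h, ?_⟩
      have hseq : s = Complex.I * ((s.im : ℝ) : ℂ) := by
        apply Complex.ext <;> simp [hre]
      rw [← hseq]
      exact hF
  · rintro (h | h)
    · obtain ⟨μ, hμ, hF⟩ := (part1 lam).mpr h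
      refine ⟨Complex.I * (μ : ℂ), by simp, ?_, hF⟩
      simp [Complex.ext_iff, hμ.ne']
    · obtain ⟨μ, hμ, hF⟩ := part2.mpr h
      refine ⟨-(Complex.I * (μ : ℂ)), by simp, ?_, hF⟩
      simp [Complex.ext_iff, hμ.ne']
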